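/- Let G be a connected dappled graph and x a vertex of G. If f1 and f2 are homomorphisms from G to the dappled triangular grid T (preserving edges, hue, and color) with f1(x) = f2(x), then f1 = f2. -/
import Mathlib


/-- The (dappled) triangular grid: the infinite graph on `ℤ × ℤ` where `(i₁,j₁)` and `(i₂,j₂)`
are adjacent iff their difference is `±(1,0)`, `±(0,1)` or `±(1,1)`. -/
def TGrid : SimpleGraph (ℤ × ℤ) :=
  SimpleGraph.fromRel (fun v w =>
    (w.1 - v.1, w.2 - v.2) ∈ ({(1,0), (-1,0), (0,1), (0,-1), (1,1), (-1,-1)} : Set (ℤ × ℤ)))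

/-- The hue of a vertex of the triangular grid: `ψ(i,j) = (i+j) mod 3`. -/
def hueT (v : ℤ × ℤ) : ZMod 3 := (v.1 : ZMod 3) + (v.2 : ZMod 3)

/-- The color of a vertex of the triangular grid: `φ(i,j) = (i mod 2, j mod 2)`. -/
def colorT (v : ℤ × ℤ) : ZMod 2 × ZMod 2 := ((v.1 : ZMod 2), (v.2 : ZMod 2))

lemma tgrid_diff {a b : ℤ × ℤ} (h : TGrid.Adj a b) :
    (b.1 - a.1, b.2 - a.2) ∈ ({(1,0), (-1,0), (0,1), (0,-1), (1,1), (-1,-1)} : Set (ℤ × ℤ)) := by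
  rcases h with ⟨hne, h | h⟩
  · exact h
  · simp only [Set.mem_insert_iff, Set.mem_singleton_iff, Prod.mk.injEq] at h ⊢
    omega

lemma step_det {d d' : ℤ × ℤ}
    (hd : d ∈ ({(1,0), (-1,0), (0,1), (0,-1), (1,1), (-1,-1)} : Set (ℤ × ℤ)))
    (hd' : d' ∈ ({(1,0), (-1,0), (0,1), (0,-1), (1,1), (-1,-1)} : Set (ℤ × ℤ)))
    (hh : (d.1 : ZMod 3) + (d.2 : ZMod 3) = (d'.1 : ZMod 3) + (d'.2 : ZMod 3))
    (hc : ((d.1 : ZMod 2), (d.2 : ZMod 2)) = ((d'.1 : ZMod 2), (d'.2 : ZMod 2))) :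
    d = d' := by
  simp only [Set.mem_insert_iff, Set.mem_singleton_iff] at hd hd'
  rcases hd with h | h | h | h | h | h <;> rcases hd' with h' | h' | h' | h' | h' | h' <;>
    subst h <;> subst h' <;> first | rfl | (exfalso; revert hh hc; norm_num <;> decide)

theorem hom_to_grid_unique {α : Type*} (G : SimpleGraph α)
    (ψ : α → ZMod 3) (φ : α → ZMod 2 × ZMod 2)
    (hψ : ∀ u v, G.Adj u v → ψ u ≠ ψ v) (hφ : ∀ u v, G.Adj u v → φ u ≠ φ v)
    (hconn : G.Connected) (x : α) (f₁ f₂ : α → ℤ × ℤ)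
    (hf₁adj : ∀ u v, G.Adj u v → TGrid.Adj (f₁ u) (f₁ v))
    (hf₁hue : ∀ v, hueT (f₁ v) = ψ v) (hf₁col : ∀ v, colorT (f₁ v) = φ v)
    (hf₂adj : ∀ u v, G.Adj u v → TGrid.Adj (f₂ u) (f₂ v))
    (hf₂hue : ∀ v, hueT (f₂ v) = ψ v) (hf₂col : ∀ v, colorT (f₂ v) = φ v)
    (hx : f₁ x = f₂ x) : f₁ = f₂ := by
  have key : ∀ {a b : α}, G.Walk a b → f₁ a = f₂ a → f₁ b = f₂ b := by
    intro a b w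
    induction w with
    | nil => exact id
    | @cons u c b hadj w ih =>
      intro hu
      apply ih
      have h₁ := tgrid_diff (hf₁adj _ _ hadj)
      have h₂ := tgrid_diff (hf₂adj _ _ hadj)
      have hh : (((f₁ c).1 - (f₁ u).1 : ℤ) : ZMod 3) + (((f₁ c).2 - (f₁ u).2 : ℤ) : ZMod 3)
          = (((f₂ c).1 - (f₂ u).1 : ℤ) : ZMod 3) + (((f₂ c).2 - (f₂ u).2 : ℤ) : ZMod 3) := by
        have e1 : hueT (f₁ c) - hueT (f₁ u) = hueT (f₂ c) - hueT (f₂ u) := by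
          rw [hf₁hue, hf₁hue, hf₂hue, hf₂hue]
        simp only [hueT] at e1
        push_cast
        linear_combination e1
      have hc : ((((f₁ c).1 - (f₁ u).1 : ℤ) : ZMod 2), (((f₁ c).2 - (f₁ u).2 : ℤ) : ZMod 2))
          = ((((f₂ c).1 - (f₂ u).1 : ℤ) : ZMod 2), (((f₂ c).2 - (f₂ u).2 : ℤ) : ZMod 2)) := by
        have e1 : colorT (f₁ c) = colorT (f₂ c) := by rw [hf₁col, hf₂col]
        have e2 : colorT (f₁ u) = colorT (f₂ u) := by rw [hf₁col, hf₂col]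
        have e1a := congrArg Prod.fst e1
        have e1b := congrArg Prod.snd e1
        have e2a := congrArg Prod.fst e2
        have e2b := congrArg Prod.snd e2
        simp only [colorT] at e1a e1b e2a e2b
        simp only [Prod.mk.injEq]
        constructor <;> push_cast <;>
          [linear_combination e1a - e2a; linear_combination e1b - e2b]
      have := step_det h₁ h₂ hh hc
      have hP : ((f₁ c).1 - (f₁ u).1, (f₁ c).2 - (f₁ u).2)
          = ((f₂ c).1 - (f₂ u).1, (f₂ c).2 - (f₂ u).2) := this
      rw [hu] at hP
      obtain ⟨e1, e2⟩ := Prod.mk.injEq .. ▸ hP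
      exact Prod.ext (by omega) (by omega)
  funext v
  exact key ((hconn.preconnected x v).some) hx
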